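/- Suppose the link function Q satisfies (A1) g'(x) = g'(Q(x)) for all x ∈ 𝒳⁻, (A2) ω(x) + ω(Q(x)) ≥ 0 for all x ∈ 𝒳⁻, and (A3) ∫_{𝒳⁻} ω(x)(1 − Q'(x)) g'(x) dx = 0. Then the transformed weight function ω̃ is nonnegative everywhere on 𝒳, and ∫_{𝒳} ω(x) g'(x) dx = ∫_{𝒳 \ 𝒳⁻} ω̃(x) g'(x) dx. -/

import Mathlib

open MeasureTheory Set Real

/-- Proposition 1(1) of Kitagawa–Wang–Xu: under (A1), (A2), (A3), the transformed
weights `ωt` are nonnegative on `𝒳` and the weighted-average estimand with the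
original weights `ω` coincides with the one with transformed weights on `𝒳 \ 𝒳⁻`. -/
theorem prop1_part1
    (𝒳 : Set ℝ) (h𝒳 : MeasurableSet 𝒳)
    (ω g g' Q Q' ωt : ℝ → ℝ)
    (hg : ∀ x, HasDerivAt g (g' x) x)
    (hωint : IntegrableOn ω 𝒳)
    (hQdiff : ∀ x ∈ {x ∈ 𝒳 | ω x < 0}, HasDerivAt Q (Q' x) x)
    (hQ'pos : ∀ x ∈ {x ∈ 𝒳 | ω x < 0}, 0 < Q' x)
    (hQinj : Set.InjOn Q {x ∈ 𝒳 | ω x < 0})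
    (hQmaps : Set.MapsTo Q {x ∈ 𝒳 | ω x < 0} {x ∈ 𝒳 | 0 ≤ ω x})
    -- defining properties of the transformed weights ω̃
    (hωt_link : ∀ x ∈ {x ∈ 𝒳 | ω x < 0}, ωt (Q x) = ω x + ω (Q x))
    (hωt_pos : ∀ x ∈ {x ∈ 𝒳 | 0 ≤ ω x} \ (Q '' {x ∈ 𝒳 | ω x < 0}), ωt x = ω x)
    (hωt_zero : ∀ x, x ∉ {x ∈ 𝒳 | 0 ≤ ω x} → ωt x = 0)
    -- integrability assumptions
    (hint1 : IntegrableOn (fun x => ω x * g' x) 𝒳)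
    (hint2 : IntegrableOn (fun x => ωt x * g' x) {x ∈ 𝒳 | 0 ≤ ω x})
    (hint3 : IntegrableOn (fun x => ω x * Q' x * g' x) {x ∈ 𝒳 | ω x < 0})
    -- (A1): g' matches at linked points
    (hA1 : ∀ x ∈ {x ∈ 𝒳 | ω x < 0}, g' x = g' (Q x))
    -- (A2): net weight is nonnegative
    (hA2 : ∀ x ∈ {x ∈ 𝒳 | ω x < 0}, 0 ≤ ω x + ω (Q x))
    -- (A3): derivative condition on Q
    (hA3 : ∫ x in {x ∈ 𝒳 | ω x < 0}, ω x * (1 - Q' x) * g' x = 0) :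
    (∀ x ∈ 𝒳, 0 ≤ ωt x) ∧
      ∫ x in 𝒳, ω x * g' x = ∫ x in 𝒳 \ {x ∈ 𝒳 | ω x < 0}, ωt x * g' x := by
  set s : Set ℝ := {x ∈ 𝒳 | ω x < 0} with hs_def
  set P : Set ℝ := {x ∈ 𝒳 | 0 ≤ ω x} with hP_def
  -- Part 1 : nonnegativity
  have part1 : ∀ x ∈ 𝒳, 0 ≤ ωt x := by
    intro x hx
    by_cases hω : 0 ≤ ω x
    · by_cases hQx : x ∈ Q '' s
      · obtain ⟨y, hy, rfl⟩ := hQx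
        rw [hωt_link y hy]
        exact hA2 y hy
      · rw [hωt_pos x ⟨⟨hx, hω⟩, hQx⟩]
        exact hω
    · rw [hωt_zero x (fun h => hω h.2)]
  refine ⟨part1, ?_⟩
  -- null measurability of s
  obtain ⟨ω₀, hω₀meas, hω₀ae⟩ := hωint.aestronglyMeasurable
  have hnull : volume ({x | ω x ≠ ω₀ x} ∩ 𝒳) = 0 := by
    rw [← Measure.restrict_apply' h𝒳]
    exact hω₀ae
  have hsnm : NullMeasurableSet s volume := by
    have ht : MeasurableSet ({x : ℝ | ω₀ x < 0} ∩ 𝒳) :=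
      (measurableSet_lt hω₀meas.measurable measurable_const).inter h𝒳
    have hae : s =ᵐ[volume] (({x : ℝ | ω₀ x < 0} ∩ 𝒳 : Set ℝ)) := by
      rw [MeasureTheory.ae_eq_set]
      constructor
      · refine measure_mono_null (fun x hx => ?_) hnull
        simp only [mem_diff, mem_inter_iff, mem_setOf_eq, hs_def] at hx ⊢
        obtain ⟨⟨hx𝒳, hωx⟩, hnt⟩ := hx
        exact ⟨fun heq => hnt ⟨heq ▸ hωx, hx𝒳⟩, hx𝒳⟩
      · refine measure_mono_null (fun x hx => ?_) hnull
        simp only [mem_diff, mem_inter_iff, mem_setOf_eq, hs_def] at hx ⊢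
        obtain ⟨⟨hωx, hx𝒳⟩, hnt⟩ := hx
        exact ⟨fun heq => hnt ⟨hx𝒳, heq ▸ hωx⟩, hx𝒳⟩
    exact ht.nullMeasurableSet.congr hae.symm
  obtain ⟨s₀, hs₀sub, hs₀meas, hs₀ae⟩ := hsnm.exists_measurable_subset_ae_eq
  have hrs : volume.restrict s₀ = volume.restrict s := Measure.restrict_congr_set hs₀ae
  have hdiffnull : volume (s \ s₀) = 0 := (MeasureTheory.ae_eq_set.mp hs₀ae).2
  have hQdiffOn : DifferentiableOn ℝ Q (s \ s₀) := fun x hx =>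
    ((hQdiff x hx.1).differentiableAt).differentiableWithinAt
  have hQimnull : volume (Q '' (s \ s₀)) = 0 :=
    addHaar_image_eq_zero_of_differentiableOn_of_addHaar_eq_zero volume hQdiffOn hdiffnull
  have hQsnull : volume (Q '' s \ Q '' s₀) = 0 := by
    refine measure_mono_null (fun y hy => ?_) hQimnull
    obtain ⟨⟨a, ha, rfl⟩, hnot⟩ := hy
    exact ⟨a, ⟨ha, fun ha0 => hnot ⟨a, ha0, rfl⟩⟩, rfl⟩
  have hQs₀ : MeasurableSet (Q '' s₀) :=
    measurable_image_of_fderivWithin hs₀meas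
      (fun x hx => ((hQdiff x (hs₀sub hx)).hasDerivWithinAt).hasFDerivWithinAt)
      (hQinj.mono hs₀sub)
  have hPs : P = 𝒳 \ s := by
    ext x
    simp only [hP_def, hs_def, mem_setOf_eq, mem_diff, not_and, not_lt]
    constructor
    · rintro ⟨h1, h2⟩; exact ⟨h1, fun _ => h2⟩
    · rintro ⟨h1, h2⟩; exact ⟨h1, h2 h1⟩
  have hPnm : NullMeasurableSet P volume := by
    rw [hPs]; exact h𝒳.nullMeasurableSet.diff hsnm
  have hsub𝒳 : s ⊆ 𝒳 := fun x hx => hx.1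
  have hPsub : P ⊆ 𝒳 := fun x hx => hx.1
  have hQsP : Q '' s ⊆ P := image_subset_iff.mpr hQmaps
  have hQs₀P : Q '' s₀ ⊆ P := (image_mono hs₀sub).trans hQsP
  -- Step A : split the integral over 𝒳
  have hsplit : ∫ x in 𝒳, ω x * g' x =
      (∫ x in P, ω x * g' x) + ∫ x in s, ω x * g' x := by
    have hU : 𝒳 = P ∪ s := by
      ext x
      simp only [hs_def, hP_def, mem_union, mem_setOf_eq]
      constructor
      · intro hx; rcases le_or_gt 0 (ω x) with h | h
        · exact Or.inl ⟨hx, h⟩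
        · exact Or.inr ⟨hx, h⟩
      · rintro (⟨h, _⟩ | ⟨h, _⟩) <;> exact h
    have hXae : 𝒳 =ᵐ[volume] ((P ∪ s₀ : Set ℝ)) := by
      rw [hU]
      exact (Filter.EventuallyEq.refl _ _).union hs₀ae.symm
    have hdisjPs : Disjoint P s := hPs ▸ disjoint_sdiff_left
    rw [Measure.restrict_congr_set hXae,
      setIntegral_union (hdisjPs.mono_right hs₀sub) hs₀meas (hint1.mono_set hPsub)
        (hint1.mono_set (hs₀sub.trans hsub𝒳)), hrs]
  -- Step B : (A3) ⇒ ∫_s ω g' = ∫_s ω Q' g'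
  have hB : ∫ x in s, ω x * g' x = ∫ x in s, ω x * Q' x * g' x := by
    have h1 : ∫ x in s, ω x * (1 - Q' x) * g' x =
        (∫ x in s, ω x * g' x) - ∫ x in s, ω x * Q' x * g' x := by
      rw [← integral_sub (hint1.mono_set hsub𝒳) hint3]
      congr 1; funext x; ring
    rw [h1] at hA3
    linarith
  -- Step C : change of variables
  have hC : ∫ y in Q '' s₀, (ωt y - ω y) * g' y = ∫ x in s, ω x * g' x := by
    rw [integral_image_eq_integral_abs_deriv_smul hs₀meas
      (fun x hx => (hQdiff x (hs₀sub hx)).hasDerivWithinAt) (hQinj.mono hs₀sub)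
      (fun y => (ωt y - ω y) * g' y), hB, ← hrs]
    apply setIntegral_congr_fun hs₀meas
    intro x hx
    have hxs : x ∈ s := hs₀sub hx
    show |Q' x| • ((ωt (Q x) - ω (Q x)) * g' (Q x)) = ω x * Q' x * g' x
    rw [hωt_link x hxs, ← hA1 x hxs, abs_of_pos (hQ'pos x hxs), smul_eq_mul]
    ring
  -- Step E : the integral of the difference over P localizes to Q '' s₀
  have hE : ∫ y in P, (ωt y - ω y) * g' y = ∫ y in Q '' s₀, (ωt y - ω y) * g' y := by
    have h1 : ∀ᵐ y ∂(volume.restrict P), (ωt y - ω y) * g' y =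
        (Q '' s₀).indicator (fun y => (ωt y - ω y) * g' y) y := by
      rw [ae_iff, Measure.restrict_apply₀' hPnm]
      refine measure_mono_null (fun y hy => ?_) hQsnull
      obtain ⟨hne, hyP⟩ := hy
      simp only [mem_setOf_eq] at hne
      by_cases hy₀ : y ∈ Q '' s₀
      · exact absurd (by rw [indicator_of_mem hy₀]) hne
      · refine ⟨?_, hy₀⟩
        by_contra hyQ
        apply hne
        rw [indicator_of_notMem hy₀, hωt_pos y ⟨hyP, hyQ⟩]
        ring
    rw [integral_congr_ae h1, setIntegral_indicator hQs₀,
      inter_eq_self_of_subset_right hQs₀P]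
  -- Step D : compare the two integrals over P
  have hD : ∫ y in P, (ωt y - ω y) * g' y =
      (∫ y in P, ωt y * g' y) - ∫ y in P, ω y * g' y := by
    rw [← integral_sub hint2 (hint1.mono_set hPsub)]
    congr 1; funext y; ring
  rw [← hPs, hsplit]
  linarith [hE, hD, hC]
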